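/- Let x be an infinite word over a finite alphabet A, let k ≥ 1, and let π : A^k → B be a higher k-block code into a finite alphabet B that is invertible on x. If x is uniformly factor-balanced, then the infinite word π(x) is uniformly factor-balanced. -/
import Mathlib


open scoped Classical

section Core

variable {A : Type*} {B : Type*}

/-- `w` occurs at position `i` of the infinite word `x`. -/
def OccursAt (x : ℕ → A) (w : List A) (i : ℕ) : Prop :=
  w = (List.range w.length).map fun j => x (i + j)

/-- `w` is a factor of the infinite word `x`. -/
def IsFactor (x : ℕ → A) (w : List A) : Prop := ∃ i, OccursAt x w i

/-- The number of (possibly overlapping) occurrences of `w` in the finite word `u`,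
i.e. `|u|_w`. -/
noncomputable def countOccs (u w : List A) : ℕ :=
  ((Finset.range (u.length + 1)).filter fun i => w <+: u.drop i).card

/-- The finite word `w` is `C`-balanced in the infinite word `x`. -/
def BalancedIn (C : ℝ) (w : List A) (x : ℕ → A) : Prop :=
  ∀ u v : List A, IsFactor x u → IsFactor x v → u.length = v.length →
    |(countOccs u w : ℝ) - (countOccs v w : ℝ)| ≤ C

/-- Every finite word is `C_w`-balanced in `x` for some constant `C_w > 0`. -/
def FactorBalanced (x : ℕ → A) : Prop :=
  ∀ w : List A, ∃ C : ℝ, 0 < C ∧ BalancedIn C w x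

/-- There is a single constant `C > 0` such that every finite word is `C`-balanced in `x`. -/
def UniformlyFactorBalanced (x : ℕ → A) : Prop :=
  ∃ C : ℝ, 0 < C ∧ ∀ w : List A, BalancedIn C w x

/-- Every letter is `C`-balanced in `x`. -/
def LetterBalanced (C : ℝ) (x : ℕ → A) : Prop :=
  ∀ a : A, BalancedIn C [a] x

/-- `x` is `P`-power-free: no factor of `x` is a `P`-th power of a nonempty word. -/
def PowerFree (P : ℕ) (x : ℕ → A) : Prop :=
  ∀ v : List A, v ≠ [] → ¬ IsFactor x (List.flatten (List.replicate P v))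

/-- The length-`n` prefix of the infinite word `x`. -/
def wordPrefix (x : ℕ → A) (n : ℕ) : List A := (List.range n).map x

/-- The extension of a substitution to finite words. -/
def substWord (τ : A → List B) (w : List A) : List B := (w.map τ).flatten

/-- The word `w` has (prefix) frequency `μ` in `x`. -/
def HasFreq (x : ℕ → A) (w : List A) (μ : ℝ) : Prop :=
  Filter.Tendsto (fun n => (countOccs (wordPrefix x n) w : ℝ) / n)
    Filter.atTop (nhds μ)

/-- `τ` is `k`-decisive in `x` with witness map `r` (each `r a` of length `k ≥ 1`,
and `τ b` starts with `r a` whenever `ab` is a factor of `x`). -/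
def DecisiveWith (τ : A → List B) (x : ℕ → A) (r : A → List B) (k : ℕ) : Prop :=
  1 ≤ k ∧ (∀ a, (r a).length = k) ∧
    ∀ a b : A, IsFactor x [a, b] → r a <+: τ b

/-- `τ` is `k`-decisive in `x`. -/
def Decisive (τ : A → List B) (x : ℕ → A) (k : ℕ) : Prop :=
  ∃ r : A → List B, DecisiveWith τ x r k

/-- The image of the infinite word `x` under the substitution `τ`: when the images of
prefixes of `x` have unbounded length, `substInf τ x` is the infinite word `τ(x)`. -/
noncomputable def substInf [Nonempty B] (τ : A → List B) (x : ℕ → A) (j : ℕ) : B :=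
  if h : ∃ n, j < (substWord τ (wordPrefix x n)).length
  then (substWord τ (wordPrefix x (Nat.find h))).get ⟨j, Nat.find_spec h⟩
  else Classical.arbitrary B

/-- Iterates of a substitution: `substIter τ n a = τ^n(a)` as a finite word. -/
def substIter (τ : A → List A) : ℕ → A → List A
  | 0, a => [a]
  | n+1, a => substWord (substIter τ n) (τ a)

/-- `τ` is prolongable on the letter `a`. -/
def Prolongable (τ : A → List A) (a : A) : Prop :=
  (τ a).head? = some a ∧ (∀ b, τ b ≠ []) ∧
    Filter.Tendsto (fun n => (substIter τ n a).length) Filter.atTop Filter.atTop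

/-- The fixed point `τ^ω(a)` of a substitution prolongable on `a`:
the limit of the prefix chain `τ^n(a)`. -/
noncomputable def fixedPoint (τ : A → List A) (a : A) (j : ℕ) : A :=
  if h : ∃ n, j < (substIter τ n a).length
  then (substIter τ (Nat.find h) a).get ⟨j, Nat.find_spec h⟩
  else a

/-- The factor complexity of `x`: the number of distinct length-`n` factors. -/
noncomputable def complexity (x : ℕ → A) (n : ℕ) : ℕ :=
  Set.ncard {w : List A | w.length = n ∧ IsFactor x w}

/-- Every factor of `x` occurs infinitely often in `x`. -/
def Recurrent (x : ℕ → A) : Prop :=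
  ∀ w : List A, IsFactor x w → ∀ N : ℕ, ∃ i, N ≤ i ∧ OccursAt x w i

/-- For every factor `w` of `x` there is `k` such that `w` occurs in
every length-`k` factor of `x`. -/
def UniformlyRecurrent (x : ℕ → A) : Prop :=
  ∀ w : List A, IsFactor x w → ∃ k : ℕ, ∀ v : List A, IsFactor x v →
    v.length = k → 1 ≤ countOccs v w

end Core

section Aux

variable {A : Type*}

private def xwd (z : ℕ → A) (i n : ℕ) : List A := (List.range n).map fun j => z (i + j)

private lemma xwd_length (z : ℕ → A) (i n : ℕ) : (xwd z i n).length = n := by simp [xwd]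

private lemma occursAt_xwd (z : ℕ → A) (i n : ℕ) : OccursAt z (xwd z i n) i := by
  simp [OccursAt, xwd]

private lemma xwd_eq_iff (z z' : ℕ → A) (i i' n : ℕ) :
    xwd z i n = xwd z' i' n ↔ ∀ t < n, z (i + t) = z' (i' + t) := by
  unfold xwd
  constructor
  · intro h t ht
    have h2 := congrArg (fun L : List A => L[t]?) h
    simpa [List.getElem?_map, List.getElem?_range, ht] using h2
  · intro h
    exact List.map_congr_left fun t ht => h t (List.mem_range.mp ht)

private lemma xwd_drop (z : ℕ → A) (i n j : ℕ) :
    (xwd z i n).drop j = xwd z (i + j) (n - j) := by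
  apply List.ext_getElem
  · simp [xwd]
  · intro t h1 h2
    simp only [xwd, List.getElem_drop, List.getElem_map, List.getElem_range]
    exact congrArg z (by omega)

private lemma xwd_take (z : ℕ → A) (i n j : ℕ) :
    (xwd z i n).take j = xwd z i (min j n) := by
  apply List.ext_getElem
  · simp [xwd]
  · intro t h1 h2
    simp only [xwd, List.getElem_take, List.getElem_map, List.getElem_range]

private lemma xwd_prefix_iff (z : ℕ → A) (w : List A) (i n : ℕ) :
    w <+: xwd z i n ↔ w.length ≤ n ∧ w = xwd z i w.length := by
  constructor
  · intro h
    have hlen := h.length_le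
    rw [xwd_length] at hlen
    refine ⟨hlen, ?_⟩
    have h3 := List.prefix_iff_eq_take.mp h
    conv_lhs => rw [h3]
    rw [xwd_take, min_eq_left hlen]
  · rintro ⟨hle, hw⟩
    rw [hw]
    have : xwd z i w.length = (xwd z i n).take w.length := by
      rw [xwd_take, min_eq_left hle]
    rw [this]
    exact List.take_prefix _ _

private lemma countOccs_eq (z : ℕ → A) (i : ℕ) (u w : List A) (hu : OccursAt z u i) :
    countOccs u w = ((Finset.range (u.length + 1)).filter
      fun j => j + w.length ≤ u.length ∧ OccursAt z w (i + j)).card := by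
  unfold countOccs
  congr 1
  apply Finset.filter_congr
  intro j hj
  simp only [Finset.mem_range] at hj
  have hu' : u = xwd z i u.length := hu
  have hd : u.drop j = xwd z (i + j) (u.length - j) := by
    conv_lhs => rw [hu']
    rw [xwd_drop]
  rw [hd, xwd_prefix_iff]
  have : OccursAt z w (i + j) ↔ w = xwd z (i + j) w.length := Iff.rfl
  rw [this]
  constructor
  · rintro ⟨h1, h2⟩; exact ⟨by omega, h2⟩
  · rintro ⟨h1, h2⟩; exact ⟨by omega, h2⟩

private lemma xwd_getD (z : ℕ → A) (a n r : ℕ) (d : A) (h : r < n) :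
    (xwd z a n).getD r d = z (a + r) := by
  rw [List.getD_eq_getElem _ _ (by simpa [xwd_length] using h)]
  simp [xwd]

end Aux


/-- Proposition: the image of a uniformly factor-balanced word under a higher `k`-block
code that is invertible on the word is uniformly factor-balanced. -/
theorem stmt8 {A B : Type*} [Fintype A] [Fintype B] (k : ℕ) (hk : 1 ≤ k)
    (π : (Fin k → A) → B) (x : ℕ → A)
    (hinv : ∃ l : ℕ, 1 ≤ l ∧ ∃ ρ : (Fin l → B) → A,
      ∀ n : ℕ, ρ (fun j => π fun i => x (n + (j : ℕ) + (i : ℕ))) = x (n + k + l))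
    (h : UniformlyFactorBalanced x) :
    UniformlyFactorBalanced (fun n => π fun j => x (n + (j : ℕ))) := by
  obtain ⟨l, hl, ρ, hρ⟩ := hinv
  obtain ⟨C, hC, hbal⟩ := h
  have hA : Nonempty A := ⟨x 0⟩
  have hcard : 0 < Fintype.card A := Fintype.card_pos
  set y : ℕ → B := fun n => π fun j => x (n + (j : ℕ)) with hy
  refine ⟨(Fintype.card A : ℝ) ^ (k + l) * C, by positivity, ?_⟩
  intro w u v hu hv hlen
  obtain ⟨i, hui⟩ := hu
  obtain ⟨i', hvi⟩ := hv
  -- Key lemma 1: whether `w` occurs at `p` in `y` depends only on `xwd x p (w.length+k-1)`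
  have K1 : ∀ p q : ℕ, xwd x p (w.length + k - 1) = xwd x q (w.length + k - 1) →
      OccursAt y w p → OccursAt y w q := by
    intro p q hpq hp
    have hx := (xwd_eq_iff x x p q _).mp hpq
    have hyeq : ∀ t < w.length, y (p + t) = y (q + t) := by
      intro t ht
      simp only [hy]
      congr 1
      funext s
      have h1 : t + (s : ℕ) < w.length + k - 1 := by have := s.isLt; omega
      have h2 := hx (t + (s : ℕ)) h1
      rw [show p + t + (s : ℕ) = p + (t + (s : ℕ)) by omega,
        show q + t + (s : ℕ) = q + (t + (s : ℕ)) by omega]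
      exact h2
    have hp' : w = xwd y p w.length := hp
    exact (hp'.trans ((xwd_eq_iff y y p q w.length).mpr hyeq) : OccursAt y w q)
  -- Key lemma 2: by invertibility, an occurrence position's block word is determined
  -- by its first `k+l` letters
  have K2 : ∀ p q : ℕ, OccursAt y w p → OccursAt y w q →
      (∀ r, r < w.length + k - 1 → r < k + l → x (p + r) = x (q + r)) →
      xwd x p (w.length + k - 1) = xwd x q (w.length + k - 1) := by
    intro p q hp hq hfirst
    have hp' : w = xwd y p w.length := hp
    have hq' : w = xwd y q w.length := hq
    have hw : ∀ t < w.length, y (p + t) = y (q + t) :=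
      (xwd_eq_iff y y p q w.length).mp (hp'.symm.trans hq')
    apply (xwd_eq_iff x x p q _).mpr
    intro r hr
    by_cases hrkl : r < k + l
    · exact hfirst r hr hrkl
    · push_neg at hrkl
      have e1 : p + r = p + (r - (k + l)) + k + l := by omega
      have e2 : q + r = q + (r - (k + l)) + k + l := by omega
      rw [e1, e2, ← hρ (p + (r - (k + l))), ← hρ (q + (r - (k + l)))]
      congr 1
      funext j
      have hj : (r - (k + l)) + (j : ℕ) < w.length := by have := j.isLt; omega
      have hyp : (π fun i0 => x (p + (r - (k + l)) + (j : ℕ) + (i0 : ℕ)))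
          = y (p + (r - (k + l)) + (j : ℕ)) := by rw [hy]
      have hyq : (π fun i0 => x (q + (r - (k + l)) + (j : ℕ) + (i0 : ℕ)))
          = y (q + (r - (k + l)) + (j : ℕ)) := by rw [hy]
      rw [hyp, hyq,
        show p + (r - (k + l)) + (j : ℕ) = p + ((r - (k + l)) + (j : ℕ)) by omega,
        show q + (r - (k + l)) + (j : ℕ) = q + ((r - (k + l)) + (j : ℕ)) by omega]
      exact hw _ hj
  -- position counts
  have hcu : countOccs u w = ((Finset.range (u.length + 1)).filter
      fun j => j + w.length ≤ u.length ∧ OccursAt y w (i + j)).card :=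
    countOccs_eq y i u w hui
  have hcv : countOccs v w = ((Finset.range (u.length + 1)).filter
      fun j => j + w.length ≤ u.length ∧ OccursAt y w (i' + j)).card := by
    rw [countOccs_eq y i' v w hvi, ← hlen]
  -- the finite set of block words
  set T := (((Finset.range (u.length + 1)).filter
        fun j => j + w.length ≤ u.length ∧ OccursAt y w (i + j)).image
        fun j => xwd x (i + j) (w.length + k - 1)) ∪
      (((Finset.range (u.length + 1)).filter
        fun j => j + w.length ≤ u.length ∧ OccursAt y w (i' + j)).image
        fun j => xwd x (i' + j) (w.length + k - 1)) with hT
  have hmemT : ∀ W ∈ T, ∃ p₀, OccursAt y w p₀ ∧ xwd x p₀ (w.length + k - 1) = W := by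
    intro W hW
    rw [hT] at hW
    simp only [Finset.mem_union, Finset.mem_image, Finset.mem_filter, Finset.mem_range] at hW
    rcases hW with ⟨j, ⟨_, _, hocc⟩, hfj⟩ | ⟨j, ⟨_, _, hocc⟩, hfj⟩
    · exact ⟨i + j, hocc, hfj⟩
    · exact ⟨i' + j, hocc, hfj⟩
  -- the fiber count equals a count of occurrences in the corresponding factor of x
  have main : ∀ (p : ℕ) (W : List A),
      (∃ p₀, OccursAt y w p₀ ∧ xwd x p₀ (w.length + k - 1) = W) →
      (((Finset.range (u.length + 1)).filter
          fun j => j + w.length ≤ u.length ∧ OccursAt y w (p + j)).filter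
        fun j => xwd x (p + j) (w.length + k - 1) = W).card
      = countOccs (xwd x p (u.length + k - 1)) W := by
    rintro p W ⟨p₀, hp₀, hfp₀⟩
    have hWlen : W.length = w.length + k - 1 := by rw [← hfp₀, xwd_length]
    rw [countOccs_eq x p _ W (occursAt_xwd x p _)]
    rw [Finset.filter_filter]
    congr 1
    ext j
    simp only [Finset.mem_filter, Finset.mem_range, xwd_length, hWlen]
    constructor
    · rintro ⟨hj, ⟨hjm, hPj⟩, hfj⟩
      refine ⟨by omega, by omega, ?_⟩
      show W = xwd x (p + j) W.length
      rw [hWlen]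
      exact hfj.symm
    · rintro ⟨hj, hjm, hocc⟩
      have hocc' : W = xwd x (p + j) W.length := hocc
      have hfj : xwd x (p + j) (w.length + k - 1) = W := by
        rw [← hWlen]; exact hocc'.symm
      exact ⟨by omega, ⟨by omega, K1 p₀ (p + j) (hfp₀.trans hfj.symm) hp₀⟩, hfj⟩
  -- decompose the counts fiberwise
  have hfib_u : countOccs u w = ∑ W ∈ T, countOccs (xwd x i (u.length + k - 1)) W := by
    rw [hcu, Finset.card_eq_sum_card_fiberwise
      (f := fun j => xwd x (i + j) (w.length + k - 1)) (t := T)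
      (fun j hj => by rw [hT]; exact Finset.mem_union_left _ (Finset.mem_image_of_mem _ hj))]
    exact Finset.sum_congr rfl fun W hW => main i W (hmemT W hW)
  have hfib_v : countOccs v w = ∑ W ∈ T, countOccs (xwd x i' (u.length + k - 1)) W := by
    rw [hcv, Finset.card_eq_sum_card_fiberwise
      (f := fun j => xwd x (i' + j) (w.length + k - 1)) (t := T)
      (fun j hj => by rw [hT]; exact Finset.mem_union_right _ (Finset.mem_image_of_mem _ hj))]
    exact Finset.sum_congr rfl fun W hW => main i' W (hmemT W hW)
  -- bound the cardinality of T
  have hcard_T : T.card ≤ Fintype.card A ^ (k + l) := by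
    have hcf : Fintype.card A ^ (k + l) = Fintype.card (Fin (k + l) → A) := by simp
    rw [hcf, ← Finset.card_univ]
    apply Finset.card_le_card_of_injOn (fun W => fun s : Fin (k + l) => W.getD s (x 0))
    · intro W _; exact Finset.mem_univ _
    · intro W hW W' hW' hgg
      obtain ⟨p, hp, hfp⟩ := hmemT W hW
      obtain ⟨q, hq, hfq⟩ := hmemT W' hW'
      have hfirst : ∀ r, r < w.length + k - 1 → r < k + l → x (p + r) = x (q + r) := by
        intro r h1 h2
        have h3 := congrFun hgg ⟨r, h2⟩
        simp only at h3
        rw [← hfp, ← hfq] at h3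
        rwa [xwd_getD x p _ r (x 0) h1, xwd_getD x q _ r (x 0) h1] at h3
      rw [← hfp, ← hfq]
      exact K2 p q hp hq hfirst
  -- finish
  rw [hfib_u, hfib_v]
  push_cast
  rw [← Finset.sum_sub_distrib]
  refine (Finset.abs_sum_le_sum_abs _ _).trans ?_
  have step : ∀ W ∈ T, |(countOccs (xwd x i (u.length + k - 1)) W : ℝ)
      - (countOccs (xwd x i' (u.length + k - 1)) W : ℝ)| ≤ C := fun W _ =>
    hbal W _ _ ⟨i, occursAt_xwd x i _⟩ ⟨i', occursAt_xwd x i' _⟩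
      (by rw [xwd_length, xwd_length])
  calc ∑ W ∈ T, |(countOccs (xwd x i (u.length + k - 1)) W : ℝ)
        - (countOccs (xwd x i' (u.length + k - 1)) W : ℝ)|
      ≤ T.card • C := Finset.sum_le_card_nsmul T _ C step
    _ = (T.card : ℝ) * C := nsmul_eq_mul _ _
    _ ≤ (Fintype.card A : ℝ) ^ (k + l) * C := by
        apply mul_le_mul_of_nonneg_right _ hC.le
        calc (T.card : ℝ) ≤ ((Fintype.card A ^ (k + l) : ℕ) : ℝ) := Nat.cast_le.mpr hcard_T
          _ = _ := by push_cast; ring
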